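/- Let Y be a Markov chain on a topological space X, recurrent starting under a σ-finite invariant Borel measure μ, and let A be a Borel set with P_{μ|_{A^c}}(Y_1 ∈ A) > 0. Then the measure μ_A^{entr}(B) := ∫_{A^c} P_x(Y_1 ∈ B) μ(dx) (for Borel B ⊂ A) is an invariant measure for the entrance Markov chain Y^{→A} obtained by sampling Y at the moments it enters A from A^c. -/

import Mathlib

open MeasureTheory Set
open scoped ENNReal

set_option linter.unusedSectionVars false
set_option linter.unusedVariables false

/-- First entrance time (at time ≥ 1) of a path `ω` into `A` from `Aᶜ`
(`0` if no such entrance occurs). -/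
noncomputable def entrTime {X : Type*} (A : Set X) (ω : ℕ → X) : ℕ :=
  sInf {k | 1 ≤ k ∧ ω (k - 1) ∉ A ∧ ω k ∈ A}

namespace EntrCh

variable {X : Type*} [MeasurableSpace X]

/-- shift by `i`: `shf i ω n = ω (n+i)`. -/
def shf (i : ℕ) (ω : ℕ → X) : ℕ → X := fun n => ω (n + i)

lemma measurable_shf (i : ℕ) : Measurable (shf (X := X) i) :=
  measurable_pi_lambda _ (fun n => measurable_pi_apply (n + i))

lemma shf_shf (i : ℕ) (ω : ℕ → X) : shf i (shf 1 ω) = shf (i + 1) ω := by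
  funext n; simp [shf, Nat.add_assoc]

/-- coordinate event -/
def ev (k : ℕ) (C : Set X) : Set (ℕ → X) := {ω | ω k ∈ C}

lemma measurableSet_ev (k : ℕ) {C : Set X} (hC : MeasurableSet C) :
    MeasurableSet (ev k C) := measurable_pi_apply k hC

/-- entrance into `A` at time `k` (meaningful for `k ≥ 1`). -/
def ent (A : Set X) (k : ℕ) : Set (ℕ → X) := {ω | ω (k - 1) ∉ A ∧ ω k ∈ A}

/-- entrance into `A` at time `k`, landing in `B`. -/
def entB (A B : Set X) (k : ℕ) : Set (ℕ → X) := {ω | ω (k - 1) ∉ A ∧ ω k ∈ B}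

/-- no entrance into `A` at any time `k` with `a ≤ k < b`. -/
def noEnt (A : Set X) (a b : ℕ) : Set (ℕ → X) := {ω | ∀ k, a ≤ k → k < b → ω ∉ ent A k}

/-- no entrance into `A` at any time `k ≥ a`. -/
def noEntTail (A : Set X) (a : ℕ) : Set (ℕ → X) := {ω | ∀ k, a ≤ k → ω ∉ ent A k}

/-- first entrance at time `N`, landing in `B`. -/
def FF (A B : Set X) (N : ℕ) : Set (ℕ → X) := noEnt A 1 N ∩ entB A B N

/-- entrance at time 1, next entrance at time `m`, landing in `B`. -/
def GG (A B : Set X) (m : ℕ) : Set (ℕ → X) := ent A 1 ∩ noEnt A 2 m ∩ entB A B m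

/-- entrance into `B` at time 1 and never an entrance into `A` afterwards. -/
def sEv (A B : Set X) : Set (ℕ → X) := entB A B 1 ∩ noEntTail A 2

variable {A B : Set X} (hA : MeasurableSet A) (hB : MeasurableSet B)

set_option linter.unusedSectionVars false

include hA


lemma measurableSet_ent (k : ℕ) : MeasurableSet (ent A k) := by
  have h : ent A k = (fun ω : ℕ → X => ω (k-1)) ⁻¹' Aᶜ ∩ (fun ω : ℕ → X => ω k) ⁻¹' A := rfl
  rw [h]
  exact ((measurable_pi_apply (k-1)) hA.compl).inter ((measurable_pi_apply k) hA)

include hB in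
lemma measurableSet_entB (k : ℕ) : MeasurableSet (entB A B k) := by
  have h : entB A B k = (fun ω : ℕ → X => ω (k-1)) ⁻¹' Aᶜ ∩ (fun ω : ℕ → X => ω k) ⁻¹' B := rfl
  rw [h]
  exact ((measurable_pi_apply (k-1)) hA.compl).inter ((measurable_pi_apply k) hB)

lemma measurableSet_noEnt (a b : ℕ) : MeasurableSet (noEnt A a b) := by
  have : noEnt A a b = ⋂ (k : ℕ) (_ : a ≤ k) (_ : k < b), (ent A k)ᶜ := by
    ext ω; simp [noEnt, mem_iInter]
  rw [this]
  exact MeasurableSet.iInter fun k => MeasurableSet.iInter fun _ =>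
    MeasurableSet.iInter fun _ => (measurableSet_ent hA k).compl

lemma measurableSet_noEntTail (a : ℕ) : MeasurableSet (noEntTail A a) := by
  have : noEntTail A a = ⋂ (k : ℕ) (_ : a ≤ k), (ent A k)ᶜ := by
    ext ω; simp [noEntTail, mem_iInter]
  rw [this]
  exact MeasurableSet.iInter fun k => MeasurableSet.iInter fun _ =>
    (measurableSet_ent hA k).compl

include hB in
lemma measurableSet_FF (N : ℕ) : MeasurableSet (FF A B N) :=
  (measurableSet_noEnt hA 1 N).inter (measurableSet_entB hA hB N)

include hB in
lemma measurableSet_GG (m : ℕ) : MeasurableSet (GG A B m) :=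
  ((measurableSet_ent hA 1).inter (measurableSet_noEnt hA 2 m)).inter
    (measurableSet_entB hA hB m)

include hB in
lemma measurableSet_sEv : MeasurableSet (sEv A B) :=
  (measurableSet_entB hA hB 1).inter (measurableSet_noEntTail hA 2)

/-- the target event: the value at the entrance time lies in `B`. -/
def gset (A B : Set X) : Set (ℕ → X) := {ω | ω (entrTime A ω) ∈ B}

omit hA in
lemma entrTime_eq_sInf (ω : ℕ → X) :
    entrTime A ω = sInf {k | 1 ≤ k ∧ ω ∈ ent A k} := rfl

lemma measurable_entrTime : Measurable (entrTime A (X := X)) := by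
  apply measurable_to_countable'
  intro k
  rcases Nat.eq_zero_or_pos k with hk | hk
  · subst hk
    have : entrTime A (X := X) ⁻¹' {0} = ⋂ (j : ℕ) (_ : 1 ≤ j), (ent A j)ᶜ := by
      ext ω
      simp only [mem_preimage, mem_singleton_iff, entrTime_eq_sInf, mem_iInter]
      constructor
      · intro h j hj hmem
        rcases Nat.sInf_eq_zero.1 h with h0 | h0
        · exact absurd h0.1 (by norm_num)
        · exact (Set.eq_empty_iff_forall_notMem.1 h0 j) ⟨hj, hmem⟩
      · intro h
        apply Nat.sInf_eq_zero.2
        right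
        ext j; simp only [mem_setOf_eq, mem_empty_iff_false, iff_false, not_and]
        exact fun hj => h j hj
    rw [this]
    exact MeasurableSet.iInter fun j => MeasurableSet.iInter fun _ =>
      (measurableSet_ent hA j).compl
  · have : entrTime A (X := X) ⁻¹' {k} =
        ent A k ∩ ⋂ (j : ℕ) (_ : 1 ≤ j) (_ : j < k), (ent A j)ᶜ := by
      ext ω
      simp only [mem_preimage, mem_singleton_iff, entrTime_eq_sInf, mem_inter_iff, mem_iInter]
      constructor
      · intro h
        have hne : {j | 1 ≤ j ∧ ω ∈ ent A j}.Nonempty := by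
          by_contra hcon
          rw [Set.not_nonempty_iff_eq_empty] at hcon
          rw [hcon] at h
          simp [Nat.sInf_empty] at h; omega
        have hmem := Nat.sInf_mem hne
        rw [h] at hmem
        refine ⟨hmem.2, fun j h1 hjk hj => ?_⟩
        have := Nat.notMem_of_lt_sInf (s := {j | 1 ≤ j ∧ ω ∈ ent A j}) (by rw [h]; exact hjk)
        exact this ⟨h1, hj⟩
      · rintro ⟨hk', hmin⟩
        refine le_antisymm (Nat.sInf_le ⟨hk, hk'⟩) ?_
        refine le_csInf ⟨k, hk, hk'⟩ ?_
        rintro j ⟨h1, hj⟩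
        by_contra hcon
        exact hmin j h1 (by omega) hj
    rw [this]
    exact (measurableSet_ent hA k).inter <| MeasurableSet.iInter fun j =>
      MeasurableSet.iInter fun _ => MeasurableSet.iInter fun _ => (measurableSet_ent hA j).compl

include hB in
lemma measurableSet_gset : MeasurableSet (gset A B) := by
  have : gset A B = ⋃ k : ℕ, (entrTime A ⁻¹' {k}) ∩ ev k B := by
    ext ω; simp only [gset, mem_setOf_eq, mem_iUnion, mem_inter_iff, mem_preimage,
      mem_singleton_iff, ev]
    exact ⟨fun h => ⟨entrTime A ω, rfl, h⟩, by rintro ⟨k, rfl, h⟩; exact h⟩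
  rw [this]
  exact MeasurableSet.iUnion fun k =>
    ((measurable_entrTime hA) (measurableSet_singleton k)).inter (measurableSet_ev k hB)

section Meas

omit hA

variable (P : X → Measure (ℕ → X)) (hPmeas : Measurable P)
  (hPprob : ∀ x, IsProbabilityMeasure (P x))
  (hP0 : ∀ x, (P x).map (fun ω => ω 0) = Measure.dirac x)
  (hPstep : ∀ x, (P x).map (fun ω n => ω (n + 1)) = ((P x).map (fun ω => ω 1)).bind P)
  (μ : Measure X)
  (hinv : Measure.map (fun ω => ω 1) (μ.bind P) = μ)

include hPmeas

lemma Q_apply {S : Set (ℕ → X)} (hS : MeasurableSet S) :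
    (μ.bind P) S = ∫⁻ x, P x S ∂μ := Measure.bind_apply hS hPmeas.aemeasurable

include hPprob hP0 in
/-- evaluating `P x` on an event constrained at time `0`. -/
lemma P_inter_ev0 (x : X) {C : Set X} (hC : MeasurableSet C)
    {S : Set (ℕ → X)} (hS : MeasurableSet S) :
    P x (S ∩ ev 0 C) = C.indicator (fun _ => P x S) x := by
  have hev : ∀ (D : Set X), MeasurableSet D → P x (ev 0 D) = D.indicator 1 x := by
    intro D hD
    have h1 : P x (ev 0 D) = ((P x).map (fun ω => ω 0)) D := by
      rw [Measure.map_apply (measurable_pi_apply 0) hD]; rfl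
    rw [h1, hP0 x, Measure.dirac_apply' x hD]
  by_cases hx : x ∈ C
  · rw [Set.indicator_of_mem hx]
    have hcompl : P x (ev 0 Cᶜ) = 0 := by
      rw [hev Cᶜ hC.compl, Set.indicator_of_notMem (by simpa using hx)]
    have hsum : P x (S ∩ ev 0 C) + P x (S \ ev 0 C) = P x S :=
      measure_inter_add_diff S (measurableSet_ev 0 hC)
    have h2 : P x (S \ ev 0 C) = 0 := by
      refine le_antisymm (le_trans (measure_mono ?_) hcompl.le) (zero_le)
      intro ω hω; exact hω.2
    rw [h2, add_zero] at hsum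
    exact hsum
  · rw [Set.indicator_of_notMem hx]
    refine le_antisymm (le_trans (measure_mono (fun ω hω => hω.2)) ?_) (zero_le)
    rw [hev C hC, Set.indicator_of_notMem hx]

include hPprob hP0 in
/-- `Q`-measure of an event intersected with a time-0 constraint. -/
lemma Q_start {C : Set X} (hC : MeasurableSet C) {S : Set (ℕ → X)} (hS : MeasurableSet S) :
    (μ.bind P) (S ∩ ev 0 C) = ∫⁻ x in C, P x S ∂μ := by
  rw [Q_apply P hPmeas μ (hS.inter (measurableSet_ev 0 hC))]
  rw [← lintegral_indicator hC]
  congr 1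
  funext x
  exact P_inter_ev0 P hPmeas hPprob hP0 x hC hS

include hPprob hP0 in
lemma Q_restrict_eq {C : Set X} (hC : MeasurableSet C) {S : Set (ℕ → X)} (hS : MeasurableSet S) :
    ((μ.restrict C).bind P) S = (μ.bind P) (S ∩ ev 0 C) := by
  rw [Q_start P hPmeas hPprob hP0 μ hC hS, Measure.bind_apply hS hPmeas.aemeasurable]

include hPprob hP0 in
lemma Q_ev0 {C : Set X} (hC : MeasurableSet C) : (μ.bind P) (ev 0 C) = μ C := by
  have h : ev 0 C = (univ : Set (ℕ → X)) ∩ ev 0 C := by simp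
  rw [h, Q_start P hPmeas hPprob hP0 μ hC MeasurableSet.univ]
  have h1 : ∀ x, P x univ = 1 := fun x => (hPprob x).measure_univ
  simp only [h1]
  exact setLIntegral_one C

include hPprob hP0 hPstep hinv in
/-- shift-invariance of `Q = μ.bind P`. -/
lemma Q_shift_one {S : Set (ℕ → X)} (hS : MeasurableSet S) :
    (μ.bind P) (shf 1 ⁻¹' S) = (μ.bind P) S := by
  have hθ : Measurable (shf (X := X) 1) := measurable_shf 1
  have hPS : Measurable (fun y => P y S) :=
    (Measure.measurable_coe hS).comp hPmeas
  have h1 : ∀ x, P x (shf 1 ⁻¹' S) = ∫⁻ ω, P (ω 1) S ∂(P x) := by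
    intro x
    have : P x (shf 1 ⁻¹' S) = ((P x).map (shf 1)) S := (Measure.map_apply hθ hS).symm
    rw [this]
    have hshf : (P x).map (shf 1) = (P x).map (fun ω n => ω (n + 1)) := rfl
    rw [hshf, hPstep x, Measure.bind_apply hS hPmeas.aemeasurable,
      lintegral_map hPS (measurable_pi_apply 1)]
  rw [Q_apply P hPmeas μ (hθ hS)]
  calc ∫⁻ x, P x (shf 1 ⁻¹' S) ∂μ
      = ∫⁻ x, ∫⁻ ω, P (ω 1) S ∂(P x) ∂μ := by
        congr 1; funext x; exact h1 x
    _ = ∫⁻ ω, P (ω 1) S ∂(μ.bind P) :=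
        (Measure.lintegral_bind hPmeas.aemeasurable (hPS.comp (measurable_pi_apply 1)).aemeasurable).symm
    _ = ∫⁻ y, P y S ∂((μ.bind P).map (fun ω => ω 1)) :=
        (lintegral_map hPS (measurable_pi_apply 1)).symm
    _ = ∫⁻ y, P y S ∂μ := by rw [hinv]
    _ = (μ.bind P) S := (Q_apply P hPmeas μ hS).symm

include hPprob hP0 hPstep hinv in
lemma Q_shift {S : Set (ℕ → X)} (hS : MeasurableSet S) (i : ℕ) :
    (μ.bind P) (shf i ⁻¹' S) = (μ.bind P) S := by
  induction i with
  | zero => congr 1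
  | succ n ih =>
      have h : shf (n+1) ⁻¹' S = shf 1 ⁻¹' (shf n ⁻¹' S) := by
        ext ω
        simp only [mem_preimage]
        rw [shf_shf n ω]
      rw [h, Q_shift_one P hPmeas hPprob hP0 hPstep μ hinv ((measurable_shf n) hS)]
      exact ih

include hPprob hP0 hPstep hinv in
lemma Q_ev {C : Set X} (hC : MeasurableSet C) (k : ℕ) : (μ.bind P) (ev k C) = μ C := by
  have h : ev k C = shf k ⁻¹' (ev 0 C) := by
    ext ω; simp [ev, shf, mem_preimage]
  rw [h, Q_shift P hPmeas hPprob hP0 hPstep μ hinv (measurableSet_ev 0 hC) k]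
  exact Q_ev0 P hPmeas hPprob hP0 μ hC

variable (hrecur : ∀ B : Set X, MeasurableSet B → 0 < μ B →
      ((μ.restrict B).bind P) {ω | ∀ n, 1 ≤ n → ω n ∉ B} = 0)

omit hPmeas in
lemma measurableSet_tailAvoid {C : Set X} (hC : MeasurableSet C) :
    MeasurableSet {ω : ℕ → X | ∀ n, 1 ≤ n → ω n ∉ C} := by
  have h : {ω : ℕ → X | ∀ n, 1 ≤ n → ω n ∉ C} = ⋂ (n : ℕ) (_ : 1 ≤ n), (ev n C)ᶜ := by
    ext ω; simp [ev, mem_iInter]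
  rw [h]
  exact MeasurableSet.iInter fun n => MeasurableSet.iInter fun _ =>
    (measurableSet_ev n hC).compl

include hPprob hP0 hrecur in
lemma recur_start {C : Set X} (hC : MeasurableSet C) :
    (μ.bind P) (ev 0 C ∩ {ω | ∀ n, 1 ≤ n → ω n ∉ C}) = 0 := by
  have hT := measurableSet_tailAvoid (X := X) hC
  rcases eq_or_lt_of_le (zero_le : 0 ≤ μ C) with hzero | hposC
  · refine le_antisymm (le_trans (measure_mono inter_subset_left) ?_) (zero_le)
    rw [Q_ev0 P hPmeas hPprob hP0 μ hC, ← hzero]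
  · have h1 : (μ.bind P) (ev 0 C ∩ {ω | ∀ n, 1 ≤ n → ω n ∉ C})
        = ((μ.restrict C).bind P) {ω | ∀ n, 1 ≤ n → ω n ∉ C} := by
      rw [Q_restrict_eq P hPmeas hPprob hP0 μ hC hT, inter_comm]
    rw [h1]
    exact hrecur C hC hposC

include hPprob hP0 hPstep hinv hrecur in
/-- a.e. no last visit to `C`. -/
lemma lastVisit_null {C : Set X} (hC : MeasurableSet C) :
    (μ.bind P) {ω | ∃ j, ω j ∈ C ∧ ∀ n, j < n → ω n ∉ C} = 0 := by
  have hT := measurableSet_tailAvoid (X := X) hC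
  have hD : MeasurableSet (ev 0 C ∩ {ω : ℕ → X | ∀ n, 1 ≤ n → ω n ∉ C}) :=
    (measurableSet_ev 0 hC).inter hT
  have hset : {ω : ℕ → X | ∃ j, ω j ∈ C ∧ ∀ n, j < n → ω n ∉ C}
      = ⋃ j : ℕ, shf j ⁻¹' (ev 0 C ∩ {ω | ∀ n, 1 ≤ n → ω n ∉ C}) := by
    ext ω
    simp only [mem_setOf_eq, mem_iUnion, mem_preimage, mem_inter_iff, ev, shf]
    constructor
    · rintro ⟨j, hj, hlast⟩
      refine ⟨j, by simpa using hj, fun n hn => hlast (n + j) (by omega)⟩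
    · rintro ⟨j, hj, hlast⟩
      refine ⟨j, by simpa using hj, fun n hn => ?_⟩
      have := hlast (n - j) (by omega)
      have hnj : n - j + j = n := by omega
      rwa [hnj] at this
  rw [hset]
  refine measure_iUnion_null fun j => ?_
  rw [Q_shift P hPmeas hPprob hP0 hPstep μ hinv hD j]
  exact recur_start P hPmeas hPprob hP0 μ hrecur hC

end Meas

section Comb

omit hA

variable {A B : Set X}

lemma mem_shf_iff (i : ℕ) (ω : ℕ → X) (S : Set (ℕ → X)) :
    ω ∈ shf i ⁻¹' S ↔ shf i ω ∈ S := Iff.rfl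

lemma shf_apply (i n : ℕ) (ω : ℕ → X) : shf i ω n = ω (n + i) := rfl

lemma shf_ent (i k : ℕ) (hk : 1 ≤ k) :
    shf i ⁻¹' ent A k = ent A (k + i) := by
  ext ω
  simp only [mem_preimage, ent, mem_setOf_eq, shf_apply]
  have h1 : k - 1 + i = k + i - 1 := by omega
  rw [h1]

lemma shf_entB (i k : ℕ) (hk : 1 ≤ k) :
    shf i ⁻¹' entB A B k = entB A B (k + i) := by
  ext ω
  simp only [mem_preimage, entB, mem_setOf_eq, shf_apply]
  have h1 : k - 1 + i = k + i - 1 := by omega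
  rw [h1]

lemma shf_ev (i k : ℕ) (C : Set X) : shf i ⁻¹' ev k C = ev (k + i) C := rfl

lemma shf_noEnt (i a b : ℕ) (ha : 1 ≤ a) :
    shf i ⁻¹' noEnt A a b = noEnt A (a + i) (b + i) := by
  ext ω
  simp only [mem_preimage, noEnt, mem_setOf_eq]
  constructor
  · intro h k hak hkb
    have h2 : a ≤ k - i := by omega
    have h3 : k - i < b := by omega
    have := h (k - i) h2 h3
    rw [← mem_preimage, shf_ent i (k - i) (by omega)] at this
    have h4 : k - i + i = k := by omega
    rwa [h4] at this
  · intro h k hak hkb hent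
    have h5 : ω ∈ ent A (k + i) := by
      rw [← shf_ent i k (by omega)]; exact hent
    exact h (k + i) (by omega) (by omega) h5

/-- the event: entrance at time `j`, no entrance in `(j, M)`, entrance into `B` at `M`. -/
def GGat (A B : Set X) (j M : ℕ) : Set (ℕ → X) :=
  ent A j ∩ noEnt A (j + 1) M ∩ entB A B M

lemma shf_GG (i m : ℕ) (hm : 1 ≤ m) :
    shf i ⁻¹' GG A B m = GGat A B (1 + i) (m + i) := by
  unfold GG GGat
  rw [Set.preimage_inter, Set.preimage_inter, shf_ent i 1 le_rfl,
    shf_noEnt i 2 m (by omega), shf_entB i m hm]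
  have : 2 + i = 1 + i + 1 := by omega
  rw [this]

lemma shf_FF (i N : ℕ) (hN : 1 ≤ N) :
    shf i ⁻¹' FF A B N = noEnt A (1 + i) (N + i) ∩ entB A B (N + i) := by
  unfold FF
  rw [Set.preimage_inter, shf_noEnt i 1 N le_rfl, shf_entB i N hN]

lemma entB_shf (M : ℕ) (hM : 1 ≤ M) :
    shf (M - 1) ⁻¹' entB A B 1 = entB A B M := by
  have h : 1 + (M - 1) = M := by omega
  rw [shf_entB (M-1) 1 le_rfl, h]

lemma entB_subset_ent (hBA : B ⊆ A) (k : ℕ) : entB A B k ⊆ ent A k :=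
  fun ω hω => ⟨hω.1, hBA hω.2⟩

/-- pointwise partition of `entB M` according to the last entrance before `M`. -/
lemma entB_partition (hBA : B ⊆ A) (M : ℕ) (hM : 1 ≤ M) :
    entB A B M = FF A B M ∪ ⋃ j ∈ Finset.Ico 1 M, GGat A B j M := by
  ext ω
  simp only [mem_union, mem_iUnion, Finset.mem_Ico, GGat, FF, mem_inter_iff, noEnt,
    mem_setOf_eq]
  constructor
  · intro hω
    by_cases hall : ∀ k, 1 ≤ k → k < M → ω ∉ ent A k
    · exact Or.inl ⟨hall, hω⟩
    · right
      push_neg at hall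
      obtain ⟨k₀, hk₀1, hk₀M, hk₀⟩ := hall
      -- take the largest such k
      have hex : ∃ j, (1 ≤ j ∧ j < M ∧ ω ∈ ent A j) ∧
          ∀ k, 1 ≤ k → k < M → ω ∈ ent A k → k ≤ j := by
        classical
        obtain ⟨j, hj, hjmax⟩ :=
          Finset.exists_max_image ((Finset.Ico 1 M).filter (fun k => ω ∈ ent A k)) id
            ⟨k₀, by simp [Finset.mem_filter, Finset.mem_Ico]; exact ⟨⟨hk₀1, hk₀M⟩, hk₀⟩⟩
        simp only [Finset.mem_filter, Finset.mem_Ico, id] at hj hjmax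
        exact ⟨j, ⟨hj.1.1, hj.1.2, hj.2⟩, fun k h1 h2 h3 => hjmax k ⟨⟨h1, h2⟩, h3⟩⟩
      obtain ⟨j, ⟨hj1, hjM, hjent⟩, hjmax⟩ := hex
      exact ⟨j, ⟨⟨hj1, hjM⟩, ⟨hjent, fun k hk1 hkM hke => by
        have := hjmax k (by omega) hkM hke; omega⟩, hω⟩⟩
  · rintro (⟨_, hω⟩ | ⟨j, _, ⟨_, _⟩, hω⟩) <;> exact hω

lemma GG_subset_ent (hBA : B ⊆ A) (m : ℕ) : GG A B m ⊆ ent A m :=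
  fun ω hω => entB_subset_ent hBA m hω.2

lemma GGat_disj_GGat (hBA : B ⊆ A) {j j' M : ℕ} (h : j < j') (h' : j' < M) :
    Disjoint (GGat A B j M) (GGat A B j' M) := by
  rw [Set.disjoint_left]
  rintro ω ⟨⟨_, hno⟩, _⟩ ⟨⟨hent, _⟩, _⟩
  exact hno j' (by omega) h' hent

lemma FF_disj_GGat (hBA : B ⊆ A) {j M : ℕ} (hj : 1 ≤ j) (h' : j < M) :
    Disjoint (FF A B M) (GGat A B j M) := by
  rw [Set.disjoint_left]
  rintro ω ⟨hno, _⟩ ⟨⟨hent, _⟩, _⟩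
  exact hno j hj h' hent

lemma FF_disj_FF (hBA : B ⊆ A) {N N' : ℕ} (hN : 1 ≤ N) (h : N < N') :
    Disjoint (FF A B N) (FF A B N') := by
  rw [Set.disjoint_left]
  rintro ω ⟨_, hentB⟩ ⟨hno, _⟩
  exact hno N hN h (entB_subset_ent hBA N hentB)

lemma sEv_disj_GG (hBA : B ⊆ A) (m : ℕ) (hm : 2 ≤ m) :
    Disjoint (sEv A B) (GG A B m) := by
  rw [Set.disjoint_left]
  rintro ω ⟨_, htail⟩ hGG
  exact htail m hm (GG_subset_ent hBA m hGG)

lemma GG_disj_GG (hBA : B ⊆ A) {m m' : ℕ} (hm : 2 ≤ m) (h : m < m') :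
    Disjoint (GG A B m) (GG A B m') := by
  rw [Set.disjoint_left]
  rintro ω hGG ⟨⟨_, hno⟩, _⟩
  exact hno m hm h (GG_subset_ent hBA m hGG)

/-- the pointwise partition of the event appearing on the right-hand side. -/
lemma Sev_partition (hBA : B ⊆ A) :
    shf 1 ⁻¹' (ev 0 A ∩ gset A B) ∩ ev 0 Aᶜ
      = sEv A B ∪ ⋃ i : ℕ, GG A B (i + 2) := by
  ext ω
  have hent : ∀ k, 1 ≤ k → (shf 1 ω ∈ ent A k ↔ ω ∈ ent A (k + 1)) := by
    intro k hk
    rw [← mem_preimage, shf_ent 1 k hk]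
  have hSset : {k | 1 ≤ k ∧ shf 1 ω ∈ ent A k} = {k | 1 ≤ k ∧ ω ∈ ent A (k + 1)} := by
    ext k; simp only [mem_setOf_eq]
    constructor
    · rintro ⟨h1, h2⟩; exact ⟨h1, (hent k h1).1 h2⟩
    · rintro ⟨h1, h2⟩; exact ⟨h1, (hent k h1).2 h2⟩
  have hTime : entrTime A (shf 1 ω) = sInf {k | 1 ≤ k ∧ ω ∈ ent A (k + 1)} := by
    rw [entrTime_eq_sInf, hSset]
  simp only [mem_inter_iff, mem_preimage, mem_union, mem_iUnion, ev, gset, mem_setOf_eq,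
    mem_compl_iff]
  constructor
  · rintro ⟨⟨h1A, hgB⟩, h0A⟩
    -- h1A : (shf 1 ω) 0 ∈ A  i.e.  ω 1 ∈ A
    have hω1 : ω 1 ∈ A := h1A
    by_cases hS : {k | 1 ≤ k ∧ ω ∈ ent A (k + 1)} = ∅
    · left
      have h0 : entrTime A (shf 1 ω) = 0 := by rw [hTime, hS, Nat.sInf_empty]
      rw [h0] at hgB
      refine ⟨⟨h0A, hgB⟩, fun k hk hke => ?_⟩
      have : k - 1 ∈ ({k | 1 ≤ k ∧ ω ∈ ent A (k + 1)} : Set ℕ) := by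
        refine ⟨by omega, ?_⟩
        have hkk : k - 1 + 1 = k := by omega
        rwa [hkk]
      rw [hS] at this
      exact this
    · right
      have hne : {k | 1 ≤ k ∧ ω ∈ ent A (k + 1)}.Nonempty :=
        Set.nonempty_iff_ne_empty.2 hS
      set t := sInf {k | 1 ≤ k ∧ ω ∈ ent A (k + 1)} with ht
      have htmem := Nat.sInf_mem hne
      rw [← ht] at htmem
      obtain ⟨ht1, htent⟩ := htmem
      refine ⟨t - 1, ?_⟩
      have htt : t - 1 + 2 = t + 1 := by omega
      rw [htt]
      have hB' : ω (t + 1) ∈ B := by rw [hTime] at hgB; exact hgB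
      refine ⟨⟨⟨h0A, hω1⟩, ?_⟩, ⟨htent.1, hB'⟩⟩
      intro k hk2 hkt hke
      have hlt : k - 1 < t := by omega
      have := Nat.notMem_of_lt_sInf (s := {k | 1 ≤ k ∧ ω ∈ ent A (k + 1)}) (by rw [← ht]; exact hlt)
      refine this ⟨by omega, ?_⟩
      have hkk : k - 1 + 1 = k := by omega
      rwa [hkk]
  · rintro (⟨⟨h0A, h1B⟩, htail⟩ | ⟨i, ⟨⟨h0A, h1A⟩, hno⟩, hentB⟩)
    · have hω1 : ω 1 ∈ A := hBA h1B
      have hS : {k | 1 ≤ k ∧ ω ∈ ent A (k + 1)} = ∅ := by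
        ext k; simp only [mem_setOf_eq, mem_empty_iff_false, iff_false, not_and]
        intro hk hke
        exact htail (k + 1) (by omega) hke
      have h0 : entrTime A (shf 1 ω) = 0 := by rw [hTime, hS, Nat.sInf_empty]
      exact ⟨⟨hω1, by rw [h0]; exact h1B⟩, h0A⟩
    · -- ω ∈ GG A B (i+2)
      have hent2 : ω ∈ ent A (i + 2) := entB_subset_ent hBA _ hentB
      have hmem : (i + 1) ∈ {k | 1 ≤ k ∧ ω ∈ ent A (k + 1)} := ⟨by omega, by
        have : i + 1 + 1 = i + 2 := by omega
        rw [this]; exact hent2⟩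
      have hlb : ∀ k ∈ {k | 1 ≤ k ∧ ω ∈ ent A (k + 1)}, i + 1 ≤ k := by
        rintro k ⟨hk1, hke⟩
        by_contra hcon
        exact hno (k + 1) (by omega) (by omega) hke
      have hT : entrTime A (shf 1 ω) = i + 1 := by
        rw [hTime]
        exact le_antisymm (Nat.sInf_le hmem) (le_csInf ⟨_, hmem⟩ hlb)
      refine ⟨⟨h1A, ?_⟩, h0A⟩
      rw [hT]
      exact hentB.2

end Comb

section Main

variable (hBA : B ⊆ A)
variable (P : X → Measure (ℕ → X)) (hPmeas : Measurable P)
  (hPprob : ∀ x, IsProbabilityMeasure (P x))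
  (hP0 : ∀ x, (P x).map (fun ω => ω 0) = Measure.dirac x)
  (hPstep : ∀ x, (P x).map (fun ω n => ω (n + 1)) = ((P x).map (fun ω => ω 1)).bind P)
  (μ : Measure X)
  (hinv : Measure.map (fun ω => ω 1) (μ.bind P) = μ)
  (hrecur : ∀ B : Set X, MeasurableSet B → 0 < μ B →
      ((μ.restrict B).bind P) {ω | ∀ n, 1 ≤ n → ω n ∉ B} = 0)

include hA hB hBA hPmeas hPprob hP0 hPstep hinv

omit hBA in
lemma Q_GGat {j M : ℕ} (hj : 1 ≤ j) (hjM : j < M) :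
    (μ.bind P) (GGat A B j M) = (μ.bind P) (GG A B (M + 1 - j)) := by
  have e1 : 1 + (j - 1) = j := by omega
  have e2 : M + 1 - j + (j - 1) = M := by omega
  have h : shf (j-1) ⁻¹' GG A B (M + 1 - j) = GGat A B j M := by
    rw [shf_GG (j-1) (M+1-j) (by omega), e1, e2]
  rw [← h, Q_shift P hPmeas hPprob hP0 hPstep μ hinv (measurableSet_GG hA hB _) (j-1)]

/-- Step E : first–entrance decomposition of the entrance measure. -/
lemma nu_decomp (M : ℕ) (hM : 1 ≤ M) :
    (μ.bind P) (entB A B 1)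
      = (μ.bind P) (FF A B M) + ∑ m ∈ Finset.Icc 2 M, (μ.bind P) (GG A B m) := by
  have h1 : (μ.bind P) (entB A B 1) = (μ.bind P) (entB A B M) := by
    rw [← entB_shf M hM,
      Q_shift P hPmeas hPprob hP0 hPstep μ hinv (measurableSet_entB hA hB 1) (M-1)]
  rw [h1, entB_partition hBA M hM]
  have hdisj : Disjoint (FF A B M) (⋃ j ∈ Finset.Ico 1 M, GGat A B j M) := by
    rw [Set.disjoint_iUnion₂_right]
    intro j hj
    rw [Finset.mem_Ico] at hj
    exact FF_disj_GGat hBA hj.1 hj.2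
  have hmeasU : MeasurableSet (⋃ j ∈ Finset.Ico 1 M, GGat A B j M) := by
    refine MeasurableSet.biUnion ((Finset.Ico 1 M) : Finset ℕ).countable_toSet fun j _ => ?_
    exact ((measurableSet_ent hA j).inter (measurableSet_noEnt hA (j+1) M)).inter
      (measurableSet_entB hA hB M)
  rw [measure_union hdisj hmeasU]
  congr 1
  rw [measure_biUnion_finset ?hd ?hm]
  case hd =>
    intro j hj j' hj' hne
    rw [Finset.mem_coe, Finset.mem_Ico] at hj hj'
    rcases lt_or_gt_of_ne hne with h | h
    · exact GGat_disj_GGat hBA h hj'.2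
    · exact (GGat_disj_GGat hBA h hj.2).symm
  case hm =>
    intro j _
    exact ((measurableSet_ent hA j).inter (measurableSet_noEnt hA (j+1) M)).inter
      (measurableSet_entB hA hB M)
  refine Finset.sum_bij' (fun j _ => M + 1 - j) (fun m _ => M + 1 - m) ?_ ?_ ?_ ?_ ?_
  · intro j hj; rw [Finset.mem_Ico] at hj; rw [Finset.mem_Icc]; beta_reduce; omega
  · intro m hm; rw [Finset.mem_Icc] at hm; rw [Finset.mem_Ico]; beta_reduce; omega
  · intro j hj; rw [Finset.mem_Ico] at hj; beta_reduce; omega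
  · intro m hm; rw [Finset.mem_Icc] at hm; beta_reduce; omega
  · intro j hj
    rw [Finset.mem_Ico] at hj
    exact Q_GGat hA hB P hPmeas hPprob hP0 hPstep μ hinv hj.1 hj.2

omit hPstep hinv in
/-- the spurious no-further-entrance event is null. -/
lemma s_null' (hPstep : ∀ x, (P x).map (fun ω n => ω (n + 1)) = ((P x).map (fun ω => ω 1)).bind P)
    (hinv : Measure.map (fun ω => ω 1) (μ.bind P) = μ)
    (hrecur : ∀ B : Set X, MeasurableSet B → 0 < μ B →
      ((μ.restrict B).bind P) {ω | ∀ n, 1 ≤ n → ω n ∉ B} = 0) :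
    (μ.bind P) (sEv A B) = 0 := by
  have hsub : sEv A B ⊆ (ev 0 Aᶜ ∩ {ω | ∀ n, 1 ≤ n → ω n ∉ Aᶜ})
      ∪ {ω | ∃ j, ω j ∈ A ∧ ∀ n, j < n → ω n ∉ A} := by
    rintro ω ⟨⟨h0A, h1B⟩, htail⟩
    by_cases hall : ∀ n, 1 ≤ n → ω n ∈ A
    · left
      exact ⟨h0A, fun n hn hmem => hmem (hall n hn)⟩
    · right
      push_neg at hall
      obtain ⟨n₀, hn₀1, hn₀⟩ := hall
      classical
      have hex : ∃ M, (1 ≤ M ∧ ω M ∉ A) ∧ ∀ m, 1 ≤ m → ω m ∉ A → M ≤ m := by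
        have hne : {m | 1 ≤ m ∧ ω m ∉ A}.Nonempty := ⟨n₀, hn₀1, hn₀⟩
        refine ⟨sInf {m | 1 ≤ m ∧ ω m ∉ A}, Nat.sInf_mem hne, ?_⟩
        intro m h1 h2
        exact Nat.sInf_le ⟨h1, h2⟩
      obtain ⟨M, ⟨hM1, hMA⟩, hMmin⟩ := hex
      have hM2 : 2 ≤ M := by
        rcases Nat.lt_or_ge M 2 with h | h
        · interval_cases M
          · exact absurd (hBA h1B) hMA
        · exact h
      refine ⟨M - 1, ?_, ?_⟩
      · -- ω (M-1) ∈ A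
        by_contra hcon
        have := hMmin (M-1) (by omega) hcon
        omega
      · intro n hn
        -- ∀ n > M - 1, ω n ∉ A
        by_contra hcon
        -- pick least n' > M - 1 i.e. n' ≥ M with ω n' ∈ A
        have hexn : ∃ n', (M - 1 < n' ∧ ω n' ∈ A) ∧ ∀ p, M - 1 < p → ω p ∈ A → n' ≤ p := by
          have hne2 : {p | M - 1 < p ∧ ω p ∈ A}.Nonempty := ⟨n, hn, hcon⟩
          refine ⟨sInf {p | M - 1 < p ∧ ω p ∈ A}, Nat.sInf_mem hne2, ?_⟩
          intro p h1 h2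
          exact Nat.sInf_le ⟨h1, h2⟩
        obtain ⟨n', ⟨hn'1, hn'A⟩, hn'min⟩ := hexn
        have hn'M : M < n' := by
          rcases Nat.lt_or_ge M n' with h | h
          · exact h
          · exfalso
            have : n' = M := by omega
            rw [this] at hn'A
            exact hMA hn'A
        have hprev : ω (n' - 1) ∉ A := by
          intro hmem
          have := hn'min (n' - 1) (by omega) hmem
          omega
        exact htail n' (by omega) ⟨hprev, hn'A⟩
  refine le_antisymm (le_trans (measure_mono hsub) ?_) (zero_le)
  refine le_trans (measure_union_le _ _) ?_
  rw [recur_start P hPmeas hPprob hP0 μ hrecur hA.compl,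
    lastVisit_null P hPmeas hPprob hP0 hPstep μ hinv hrecur hA]
  simp

/-- Step B : value of the RHS event. -/
lemma RHS_val :
    (μ.bind P) (shf 1 ⁻¹' (ev 0 A ∩ gset A B) ∩ ev 0 Aᶜ)
      = (μ.bind P) (sEv A B) + ∑' i : ℕ, (μ.bind P) (GG A B (i + 2)) := by
  rw [Sev_partition hBA]
  have hdisj : Disjoint (sEv A B) (⋃ i : ℕ, GG A B (i + 2)) := by
    rw [Set.disjoint_iUnion_right]
    intro i
    exact sEv_disj_GG hBA (i+2) (by omega)
  have hmeasU : MeasurableSet (⋃ i : ℕ, GG A B (i + 2)) :=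
    MeasurableSet.iUnion fun i => measurableSet_GG hA hB (i+2)
  rw [measure_union hdisj hmeasU]
  congr 1
  refine measure_iUnion ?_ fun i => measurableSet_GG hA hB (i+2)
  intro i i' hne
  rcases lt_or_gt_of_ne hne with h | h
  · exact GG_disj_GG hBA (by omega) (by omega)
  · exact (GG_disj_GG hBA (by omega) (by omega)).symm

omit hPstep hinv hBA in
/-- Step A : the RHS integral as a path-space event. -/
lemma RHS_eq (hPstep : ∀ x, (P x).map (fun ω n => ω (n + 1)) = ((P x).map (fun ω => ω 1)).bind P) :
    ∫⁻ x, P x (gset A B) ∂((Measure.map (fun ω => ω 1) ((μ.restrict Aᶜ).bind P)).restrict A)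
      = (μ.bind P) (shf 1 ⁻¹' (ev 0 A ∩ gset A B) ∩ ev 0 Aᶜ) := by
  have hg : MeasurableSet (gset A B) := measurableSet_gset hA hB
  have hS0 : MeasurableSet (ev 0 A ∩ gset A B) := (measurableSet_ev 0 hA).inter hg
  have hPg : Measurable (fun y => P y (gset A B)) := (Measure.measurable_coe hg).comp hPmeas
  have hφ : Measurable (fun y => A.indicator (fun z => P z (gset A B)) y) :=
    hPg.indicator hA
  have key : ∀ x : X, ∫⁻ ω, A.indicator (fun z => P z (gset A B)) (ω 1) ∂(P x)
      = P x (shf 1 ⁻¹' (ev 0 A ∩ gset A B)) := by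
    intro x
    have h1 : P x (shf 1 ⁻¹' (ev 0 A ∩ gset A B)) = ((P x).map (shf 1)) (ev 0 A ∩ gset A B) :=
      (Measure.map_apply (measurable_shf 1) hS0).symm
    have h2 : (P x).map (shf 1) = ((P x).map (fun ω => ω 1)).bind P := hPstep x
    have hf : Measurable (fun y => P y (ev 0 A ∩ gset A B)) :=
      (Measure.measurable_coe hS0).comp hPmeas
    rw [h1, h2, Measure.bind_apply hS0 hPmeas.aemeasurable,
      lintegral_map hf (measurable_pi_apply 1)]
    refine lintegral_congr fun ω => ?_
    rw [inter_comm (ev 0 A)]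
    rw [P_inter_ev0 P hPmeas hPprob hP0 (ω 1) hA hg]
    by_cases hy : ω 1 ∈ A
    · rw [Set.indicator_of_mem hy, Set.indicator_of_mem hy]
    · rw [Set.indicator_of_notMem hy, Set.indicator_of_notMem hy]
  calc ∫⁻ x, P x (gset A B) ∂((Measure.map (fun ω => ω 1) ((μ.restrict Aᶜ).bind P)).restrict A)
      = ∫⁻ y, A.indicator (fun z => P z (gset A B)) y
          ∂(Measure.map (fun ω => ω 1) ((μ.restrict Aᶜ).bind P)) := by
        rw [lintegral_indicator hA]
    _ = ∫⁻ ω, A.indicator (fun z => P z (gset A B)) (ω 1) ∂((μ.restrict Aᶜ).bind P) := by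
        rw [lintegral_map hφ (measurable_pi_apply 1)]
    _ = ∫⁻ x, ∫⁻ ω, A.indicator (fun z => P z (gset A B)) (ω 1) ∂(P x) ∂(μ.restrict Aᶜ) := by
        have hφ1 : Measurable (fun ω : ℕ → X => A.indicator (fun z => P z (gset A B)) (ω 1)) :=
          hφ.comp (measurable_pi_apply 1)
        rw [Measure.lintegral_bind hPmeas.aemeasurable hφ1.aemeasurable]
    _ = ∫⁻ x in Aᶜ, P x (shf 1 ⁻¹' (ev 0 A ∩ gset A B)) ∂μ := by
        refine lintegral_congr fun x => key x
    _ = (μ.bind P) (shf 1 ⁻¹' (ev 0 A ∩ gset A B) ∩ ev 0 Aᶜ) := by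
        rw [Q_start P hPmeas hPprob hP0 μ hA.compl ((measurable_shf 1) hS0)]

end Main

section StepF

variable {A B : Set X}

/-- number (as `ℝ≥0∞`) of `B`-visits at times `N+1, …, N+R`. -/
noncomputable def cfun (B : Set X) (N R : ℕ) (ω : ℕ → X) : ℝ≥0∞ :=
  ∑ j ∈ Finset.Icc 1 R, (ev (j + N) B).indicator (fun _ => (1:ℝ≥0∞)) ω

/-- at least `k` visits. -/
def cntSet (B : Set X) (N R k : ℕ) : Set (ℕ → X) := {ω | (k:ℝ≥0∞) ≤ cfun B N R ω}

/-- in `B` at time 0 but fewer than `k` visits to `B` during `[1,R]`. -/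
def ZZ (B : Set X) (k R : ℕ) : Set (ℕ → X) := ev 0 B ∩ (cntSet B 0 R k)ᶜ

omit hA in
lemma measurable_cfun (hB : MeasurableSet B) (N R : ℕ) : Measurable (cfun B N R) := by
  refine Finset.measurable_sum _ fun j _ => ?_
  exact (measurable_const).indicator (measurableSet_ev (j+N) hB)

omit hA in
lemma measurableSet_cntSet (hB : MeasurableSet B) (N R k : ℕ) :
    MeasurableSet (cntSet B N R k) :=
  measurableSet_le measurable_const (measurable_cfun hB N R)

omit hA in
lemma measurableSet_ZZ (hB : MeasurableSet B) (k R : ℕ) : MeasurableSet (ZZ B k R) :=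
  (measurableSet_ev 0 hB).inter (measurableSet_cntSet hB 0 R k).compl

omit hA in
lemma cfun_shf (N R : ℕ) (ω : ℕ → X) : cfun B 0 R (shf N ω) = cfun B N R ω := by
  unfold cfun
  refine Finset.sum_congr rfl fun j _ => ?_
  by_cases h : ω (j + N) ∈ B
  · have h1 : shf N ω ∈ ev (j + 0) B := by simpa [ev, shf_apply] using h
    have h2 : ω ∈ ev (j + N) B := h
    rw [Set.indicator_of_mem h1, Set.indicator_of_mem h2]
  · have h1 : shf N ω ∉ ev (j + 0) B := by simpa [ev, shf_apply] using h
    have h2 : ω ∉ ev (j + N) B := h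
    rw [Set.indicator_of_notMem h1, Set.indicator_of_notMem h2]

omit hA in
lemma cfun_mono (N : ℕ) (ω : ℕ → X) {R R' : ℕ} (h : R ≤ R') :
    cfun B N R ω ≤ cfun B N R' ω := by
  unfold cfun
  exact Finset.sum_le_sum_of_subset (Finset.Icc_subset_Icc_right h)

omit hA in
lemma FF_subset_ev (N : ℕ) : FF A B N ⊆ ev N B := fun ω hω => hω.2.2

omit hA in
lemma FF_succ_subset (N : ℕ) (hN : 1 ≤ N) :
    FF A B (N + 1) ⊆ shf 1 ⁻¹' FF A B N := by
  rw [shf_FF 1 N hN]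
  rintro ω ⟨hno, he⟩
  exact ⟨fun k hk2 hkN => hno k (by omega) hkN, he⟩

end StepF

section StepF2

variable (hBA : B ⊆ A)
variable (P : X → Measure (ℕ → X)) (hPmeas : Measurable P)
  (hPprob : ∀ x, IsProbabilityMeasure (P x))
  (hP0 : ∀ x, (P x).map (fun ω => ω 0) = Measure.dirac x)
  (hPstep : ∀ x, (P x).map (fun ω n => ω (n + 1)) = ((P x).map (fun ω => ω 1)).bind P)
  (μ : Measure X)
  (hinv : Measure.map (fun ω => ω 1) (μ.bind P) = μ)
  (hrecur : ∀ B : Set X, MeasurableSet B → 0 < μ B →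
      ((μ.restrict B).bind P) {ω | ∀ n, 1 ≤ n → ω n ∉ B} = 0)

include hA hB hPmeas hPprob hP0 hPstep hinv

lemma q'_antitone (j : ℕ) :
    Antitone (fun M => (μ.bind P) (FF A B (M+1) ∩ ev (j + (M+1)) B)) := by
  refine antitone_nat_of_succ_le fun N => ?_
  have hsub : FF A B (N+2) ∩ ev (j + (N+2)) B
      ⊆ shf 1 ⁻¹' (FF A B (N+1) ∩ ev (j + (N+1)) B) := by
    rw [Set.preimage_inter, shf_ev 1 (j + (N+1)) B]
    have h1 : j + (N + 1) + 1 = j + (N + 2) := by omega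
    rw [h1]
    exact Set.inter_subset_inter_left _ (FF_succ_subset (N+1) (by omega))
  refine le_trans (measure_mono hsub) ?_
  rw [Q_shift P hPmeas hPprob hP0 hPstep μ hinv
    ((measurableSet_FF hA hB (N+1)).inter (measurableSet_ev _ hB)) 1]

lemma t_antitone : Antitone (fun M => (μ.bind P) (FF A B (M+1))) := by
  refine antitone_nat_of_succ_le fun N => ?_
  refine le_trans (measure_mono (FF_succ_subset (N+1) (by omega))) ?_
  rw [Q_shift P hPmeas hPprob hP0 hPstep μ hinv (measurableSet_FF hA hB (N+1)) 1]

include hBA in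
lemma slot_bound (K : ℕ) (hK : 2 ≤ K) :
    ∑ j ∈ Finset.Icc 1 (K-1), (μ.bind P) (FF A B (K-j) ∩ ev K B) ≤ μ B := by
  have hd : (↑(Finset.Icc 1 (K-1)) : Set ℕ).Pairwise
      (Function.onFun Disjoint fun j => FF A B (K-j) ∩ ev K B) := by
    intro j hj j' hj' hne
    rw [Finset.mem_coe, Finset.mem_Icc] at hj hj'
    have hKj : K - j ≠ K - j' := by omega
    rcases lt_or_gt_of_ne hKj with h | h
    · exact Disjoint.mono inter_subset_left inter_subset_left
        (FF_disj_FF hBA (by omega) h)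
    · exact (Disjoint.mono inter_subset_left inter_subset_left
        (FF_disj_FF hBA (by omega) h)).symm
  have hm : ∀ j ∈ Finset.Icc 1 (K-1), MeasurableSet (FF A B (K-j) ∩ ev K B) :=
    fun j _ => (measurableSet_FF hA hB (K-j)).inter (measurableSet_ev K hB)
  rw [← measure_biUnion_finset hd hm]
  have hsub : (⋃ j ∈ Finset.Icc 1 (K-1), FF A B (K-j) ∩ ev K B) ⊆ ev K B :=
    Set.iUnion₂_subset fun j _ => inter_subset_right
  refine le_trans (measure_mono hsub) ?_
  rw [Q_ev P hPmeas hPprob hP0 hPstep μ hinv hB K]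

lemma count_ge (N R k : ℕ) :
    (k : ℝ≥0∞) * (μ.bind P) (FF A B N ∩ cntSet B N R k)
      ≤ ∑ j ∈ Finset.Icc 1 R, (μ.bind P) (FF A B N ∩ ev (j + N) B) := by
  have hE : MeasurableSet (FF A B N ∩ cntSet B N R k) :=
    (measurableSet_FF hA hB N).inter (measurableSet_cntSet hB N R k)
  have hRHS : ∑ j ∈ Finset.Icc 1 R, (μ.bind P) (FF A B N ∩ ev (j + N) B)
      = ∫⁻ ω, ∑ j ∈ Finset.Icc 1 R,
          (FF A B N ∩ ev (j + N) B).indicator (fun _ => (1:ℝ≥0∞)) ω ∂(μ.bind P) := by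
    rw [lintegral_finset_sum _ (fun j _ => (measurable_const).indicator
      ((measurableSet_FF hA hB N).inter (measurableSet_ev (j+N) hB)))]
    refine Finset.sum_congr rfl fun j _ => ?_
    rw [lintegral_indicator_const
      ((measurableSet_FF hA hB N).inter (measurableSet_ev (j+N) hB)), one_mul]
  have hLHS : (k : ℝ≥0∞) * (μ.bind P) (FF A B N ∩ cntSet B N R k)
      = ∫⁻ ω, (k : ℝ≥0∞) * (FF A B N ∩ cntSet B N R k).indicator (fun _ => (1:ℝ≥0∞)) ω
          ∂(μ.bind P) := by
    rw [lintegral_const_mul _ ((measurable_const).indicator hE),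
      lintegral_indicator_const hE, one_mul]
  rw [hRHS, hLHS]
  refine lintegral_mono fun ω => ?_
  by_cases hω : ω ∈ FF A B N ∩ cntSet B N R k
  · rw [Set.indicator_of_mem hω]
    have h1 : ∑ j ∈ Finset.Icc 1 R,
        (FF A B N ∩ ev (j + N) B).indicator (fun _ => (1:ℝ≥0∞)) ω = cfun B N R ω := by
      refine Finset.sum_congr rfl fun j _ => ?_
      by_cases hj : ω ∈ ev (j + N) B
      · rw [Set.indicator_of_mem (show ω ∈ FF A B N ∩ ev (j+N) B from ⟨hω.1, hj⟩), Set.indicator_of_mem hj]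
      · rw [Set.indicator_of_notMem (fun hc => hj hc.2), Set.indicator_of_notMem hj]
    rw [h1, mul_one]
    exact hω.2
  · rw [Set.indicator_of_notMem hω, mul_zero]
    exact zero_le

lemma escape_bound (N R k : ℕ) :
    (μ.bind P) (FF A B N ∩ (cntSet B N R k)ᶜ) ≤ (μ.bind P) (ZZ B k R) := by
  have hsub : FF A B N ∩ (cntSet B N R k)ᶜ ⊆ shf N ⁻¹' ZZ B k R := by
    rintro ω ⟨hFF, hcnt⟩
    rw [mem_preimage]
    refine ⟨?_, ?_⟩
    · show shf N ω 0 ∈ B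
      rw [shf_apply]
      have h0N : 0 + N = N := by omega
      rw [h0N]
      exact hFF.2.2
    · show ¬ (k:ℝ≥0∞) ≤ cfun B 0 R (shf N ω)
      rw [cfun_shf N R ω]
      exact hcnt
  refine le_trans (measure_mono hsub) ?_
  rw [Q_shift P hPmeas hPprob hP0 hPstep μ hinv (measurableSet_ZZ hB k R) N]

include hrecur in
lemma ZZ_iInf_zero (k : ℕ) (hμB : μ B ≠ ⊤) :
    ⨅ R : ℕ, (μ.bind P) (ZZ B k R) = 0 := by
  have hanti : Antitone (fun R => ZZ B k R) := by
    refine antitone_nat_of_succ_le fun R => ?_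
    rintro ω ⟨h0, hc⟩
    refine ⟨h0, fun hc' => hc ?_⟩
    exact le_trans hc' (cfun_mono 0 ω (Nat.le_succ R))
  have hlast : (⋂ R, ZZ B k R) ⊆ {ω | ∃ j, ω j ∈ B ∧ ∀ n, j < n → ω n ∉ B} := by
    intro ω hω
    rw [mem_iInter] at hω
    have h0B : ω 0 ∈ B := (hω 0).1
    have hcnt : ∀ R, ¬ ((k:ℝ≥0∞) ≤ cfun B 0 R ω) := fun R => (hω R).2
    by_cases hinf : ∀ j, ∃ n, j < n ∧ ω n ∈ B
    · exfalso
      have hgrow : ∀ m : ℕ, ∃ R, (m:ℝ≥0∞) ≤ cfun B 0 R ω := by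
        intro m
        induction m with
        | zero => exact ⟨0, by simp⟩
        | succ m ih =>
            obtain ⟨R, hR⟩ := ih
            obtain ⟨n, hnR, hnB⟩ := hinf R
            refine ⟨n, ?_⟩
            have hnot : n ∉ Finset.Icc 1 R := by
              rw [Finset.mem_Icc]; omega
            have hsub : insert n (Finset.Icc 1 R) ⊆ Finset.Icc 1 n := by
              intro p hp
              rw [Finset.mem_insert, Finset.mem_Icc] at hp
              rw [Finset.mem_Icc]
              omega
            have hstep : cfun B 0 R ω + 1 ≤ cfun B 0 n ω := by
              have hins : ∑ j ∈ insert n (Finset.Icc 1 R),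
                  (ev (j + 0) B).indicator (fun _ => (1:ℝ≥0∞)) ω
                  = (ev (n + 0) B).indicator (fun _ => (1:ℝ≥0∞)) ω + cfun B 0 R ω :=
                Finset.sum_insert hnot
              have hn1 : (ev (n + 0) B).indicator (fun _ => (1:ℝ≥0∞)) ω = 1 := by
                refine Set.indicator_of_mem ?_ _
                show ω (n + 0) ∈ B
                simpa using hnB
              calc cfun B 0 R ω + 1 = 1 + cfun B 0 R ω := by ring
                _ = ∑ j ∈ insert n (Finset.Icc 1 R),
                      (ev (j + 0) B).indicator (fun _ => (1:ℝ≥0∞)) ω := by rw [hins, hn1]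
                _ ≤ cfun B 0 n ω := Finset.sum_le_sum_of_subset hsub
            calc ((m+1 : ℕ) : ℝ≥0∞) = (m:ℝ≥0∞) + 1 := by push_cast; ring
              _ ≤ cfun B 0 R ω + 1 := add_le_add_left hR 1
              _ ≤ cfun B 0 n ω := hstep
      obtain ⟨R, hR⟩ := hgrow k
      exact hcnt R hR
    · push_neg at hinf
      obtain ⟨j, hj⟩ := hinf
      classical
      have hne : ((Finset.Icc 0 j).filter (fun p => ω p ∈ B)).Nonempty := by
        refine ⟨0, ?_⟩
        rw [Finset.mem_filter, Finset.mem_Icc]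
        exact ⟨⟨Nat.zero_le 0, Nat.zero_le j⟩, h0B⟩
      obtain ⟨p, hp, hpmax⟩ :=
        Finset.exists_max_image ((Finset.Icc 0 j).filter (fun q => ω q ∈ B)) id hne
      rw [Finset.mem_filter, Finset.mem_Icc] at hp
      refine ⟨p, hp.2, fun n hn hnB => ?_⟩
      rcases Nat.lt_or_ge j n with h | h
      · exact hj n h hnB
      · have := hpmax n (by rw [Finset.mem_filter, Finset.mem_Icc]; exact ⟨⟨Nat.zero_le n, h⟩, hnB⟩)
        simp only [id] at this
        omega
  have hzero : (μ.bind P) (⋂ R, ZZ B k R) = 0 := by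
    refine le_antisymm (le_trans (measure_mono hlast) ?_) (zero_le)
    rw [lastVisit_null P hPmeas hPprob hP0 hPstep μ hinv hrecur hB]
  have hfin : (μ.bind P) (ZZ B k 0) ≠ ⊤ := by
    refine ne_top_of_le_ne_top hμB ?_
    refine le_trans (measure_mono inter_subset_left) ?_
    rw [Q_ev P hPmeas hPprob hP0 hPstep μ hinv hB 0]
  have htend : Filter.Tendsto (fun R => (μ.bind P) (ZZ B k R)) Filter.atTop
      (nhds ((μ.bind P) (⋂ R, ZZ B k R))) :=
    tendsto_measure_iInter_atTop
      (fun R => (measurableSet_ZZ hB k R).nullMeasurableSet) hanti ⟨0, hfin⟩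
  have htend2 : Filter.Tendsto (fun R => (μ.bind P) (ZZ B k R)) Filter.atTop
      (nhds (⨅ R : ℕ, (μ.bind P) (ZZ B k R))) :=
    tendsto_atTop_iInf (fun R R' h => measure_mono (hanti h))
  rw [hzero] at htend
  exact tendsto_nhds_unique htend2 htend

include hBA hrecur in
lemma L_zero (hμB : μ B ≠ ⊤) :
    ⨅ N : ℕ, (μ.bind P) (FF A B (N+1)) = 0 := by
  set L := ⨅ N : ℕ, (μ.bind P) (FF A B (N+1)) with hL
  -- the per-lag limits
  set lam : ℕ → ℝ≥0∞ := fun j => ⨅ M : ℕ, (μ.bind P) (FF A B (M+1) ∩ ev (j + (M+1)) B)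
    with hlam
  -- (1) ∑_{j ≤ J} lam j ≤ μ B
  have key1 : ∀ J : ℕ, ∑ j ∈ Finset.Icc 1 J, lam j ≤ μ B := by
    intro J
    rcases Nat.eq_zero_or_pos J with hJ | hJ
    · subst hJ; simp
    have hterm : ∀ j ∈ Finset.Icc 1 J,
        lam j ≤ (μ.bind P) (FF A B (J+1-j) ∩ ev (J+1) B) := by
      intro j hj
      rw [Finset.mem_Icc] at hj
      have h1 : lam j ≤ (μ.bind P) (FF A B ((J-j)+1) ∩ ev (j + ((J-j)+1)) B) :=
        iInf_le _ (J - j)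
      have e1 : (J-j)+1 = J+1-j := by omega
      have e2 : j + ((J-j)+1) = J+1 := by omega
      rwa [e2, e1] at h1
    refine le_trans (Finset.sum_le_sum hterm) ?_
    have hslot := slot_bound hA hB hBA P hPmeas hPprob hP0 hPstep μ hinv (J+1) (by omega)
    have e3 : J + 1 - 1 = J := by omega
    rwa [e3] at hslot
  -- (2) k·(L − Z_{k,R}) ≤ ∑_{j ≤ R} lam j
  have key2 : ∀ k R : ℕ, (k:ℝ≥0∞) * (L - (μ.bind P) (ZZ B k R))
      ≤ ∑ j ∈ Finset.Icc 1 R, lam j := by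
    intro k R
    have hM : ∀ M : ℕ, (k:ℝ≥0∞) * (L - (μ.bind P) (ZZ B k R))
        ≤ ∑ j ∈ Finset.Icc 1 R, (μ.bind P) (FF A B (M+1) ∩ ev (j + (M+1)) B) := by
      intro M
      have hsplit : (μ.bind P) (FF A B (M+1) ∩ cntSet B (M+1) R k)
          + (μ.bind P) (FF A B (M+1) ∩ (cntSet B (M+1) R k)ᶜ)
          = (μ.bind P) (FF A B (M+1)) := by
        rw [← measure_inter_add_diff (FF A B (M+1)) (measurableSet_cntSet hB (M+1) R k)]
        rfl
      have hLle : L ≤ (μ.bind P) (FF A B (M+1)) := iInf_le _ M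
      have h2 : L ≤ (μ.bind P) (FF A B (M+1) ∩ cntSet B (M+1) R k)
          + (μ.bind P) (ZZ B k R) := by
        refine le_trans hLle ?_
        rw [← hsplit]
        exact add_le_add le_rfl
          (escape_bound hA hB P hPmeas hPprob hP0 hPstep μ hinv (M+1) R k)
      have h3 : L - (μ.bind P) (ZZ B k R)
          ≤ (μ.bind P) (FF A B (M+1) ∩ cntSet B (M+1) R k) := tsub_le_iff_right.mpr h2
      refine le_trans (mul_le_mul_right h3 (k:ℝ≥0∞)) ?_
      exact count_ge hA hB P hPmeas hPprob hP0 hPstep μ hinv (M+1) R k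
    have htendsum : Filter.Tendsto
        (fun M => ∑ j ∈ Finset.Icc 1 R, (μ.bind P) (FF A B (M+1) ∩ ev (j + (M+1)) B))
        Filter.atTop (nhds (∑ j ∈ Finset.Icc 1 R, lam j)) := by
      refine tendsto_finset_sum _ fun j _ => ?_
      exact tendsto_atTop_iInf (q'_antitone hA hB P hPmeas hPprob hP0 hPstep μ hinv j)
    exact ge_of_tendsto htendsum (Filter.Eventually.of_forall hM)
  -- (3) k·L ≤ μ B for every k
  have key3 : ∀ k : ℕ, (k:ℝ≥0∞) * L ≤ μ B := by
    intro k
    have hR : ∀ R : ℕ, (k:ℝ≥0∞) * L ≤ μ B + (k:ℝ≥0∞) * (μ.bind P) (ZZ B k R) := by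
      intro R
      have h4 : L ≤ (L - (μ.bind P) (ZZ B k R)) + (μ.bind P) (ZZ B k R) := le_tsub_add
      calc (k:ℝ≥0∞) * L
          ≤ (k:ℝ≥0∞) * ((L - (μ.bind P) (ZZ B k R)) + (μ.bind P) (ZZ B k R)) :=
            mul_le_mul_right h4 _
        _ = (k:ℝ≥0∞) * (L - (μ.bind P) (ZZ B k R))
            + (k:ℝ≥0∞) * (μ.bind P) (ZZ B k R) := by ring
        _ ≤ (∑ j ∈ Finset.Icc 1 R, lam j) + (k:ℝ≥0∞) * (μ.bind P) (ZZ B k R) :=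
            add_le_add (key2 k R) le_rfl
        _ ≤ μ B + (k:ℝ≥0∞) * (μ.bind P) (ZZ B k R) := add_le_add (key1 R) le_rfl
    have hZanti : Antitone (fun R => (μ.bind P) (ZZ B k R)) := by
      refine fun R R' h => measure_mono ?_
      refine fun ω hω => ?_
      obtain ⟨h0, hc⟩ := hω
      exact ⟨h0, fun hc' => hc (le_trans hc' (cfun_mono 0 ω h))⟩
    have htendZ : Filter.Tendsto (fun R => μ B + (k:ℝ≥0∞) * (μ.bind P) (ZZ B k R))
        Filter.atTop (nhds (μ B + (k:ℝ≥0∞) * 0)) := by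
      have h5 : Filter.Tendsto (fun R => (μ.bind P) (ZZ B k R)) Filter.atTop (nhds 0) := by
        have := tendsto_atTop_iInf hZanti
        rwa [ZZ_iInf_zero hA hB P hPmeas hPprob hP0 hPstep μ hinv hrecur k hμB] at this
      exact Filter.Tendsto.const_add _ (ENNReal.Tendsto.const_mul h5
        (Or.inr (ENNReal.natCast_ne_top k)))
    rw [mul_zero, add_zero] at htendZ
    exact ge_of_tendsto htendZ (Filter.Eventually.of_forall hR)
  -- conclude L = 0
  by_contra hL0
  have hLfin : L ≠ ⊤ := by
    refine ne_top_of_le_ne_top hμB ?_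
    refine le_trans (iInf_le _ 0) ?_
    have hsub1 : FF A B (0+1) ⊆ ev 1 B := fun ω hω => hω.2.2
    refine le_trans (measure_mono hsub1) ?_
    rw [Q_ev P hPmeas hPprob hP0 hPstep μ hinv hB 1]
  obtain ⟨k, hk⟩ := ENNReal.exists_nat_gt (ENNReal.div_lt_top hμB hL0).ne
  have : μ B < (k:ℝ≥0∞) * L :=
    (ENNReal.div_lt_iff (Or.inl hL0) (Or.inl hLfin)).mp hk
  exact absurd (key3 k) (not_le.mpr this)

include hBA in
lemma sum_range_eq_Icc (M : ℕ) :
    ∑ i ∈ Finset.range M, (μ.bind P) (GG A B (i+2))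
      = ∑ m ∈ Finset.Icc 2 (M+1), (μ.bind P) (GG A B m) := by
  refine Finset.sum_bij' (fun i _ => i + 2) (fun m _ => m - 2) ?_ ?_ ?_ ?_ ?_
  · intro i hi; rw [Finset.mem_range] at hi; rw [Finset.mem_Icc]; beta_reduce; omega
  · intro m hm; rw [Finset.mem_Icc] at hm; rw [Finset.mem_range]; beta_reduce; omega
  · intro i hi; rw [Finset.mem_range] at hi; beta_reduce; omega
  · intro m hm; rw [Finset.mem_Icc] at hm; beta_reduce; omega
  · intro i hi; rfl

include hBA hrecur in
lemma main_fin (hμB : μ B ≠ ⊤) :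
    (μ.bind P) (entB A B 1) = ∑' i : ℕ, (μ.bind P) (GG A B (i+2)) := by
  have step1 : ∀ M : ℕ, (μ.bind P) (entB A B 1)
      = (μ.bind P) (FF A B (M+1)) + ∑ i ∈ Finset.range M, (μ.bind P) (GG A B (i+2)) := by
    intro M
    rw [sum_range_eq_Icc hA hB hBA P hPmeas hPprob hP0 hPstep μ hinv M]
    exact nu_decomp hA hB hBA P hPmeas hPprob hP0 hPstep μ hinv (M+1) (by omega)
  refine le_antisymm ?_ ?_
  · -- ν ≤ tsum
    have step3 : ∀ M : ℕ, (μ.bind P) (entB A B 1)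
        ≤ (μ.bind P) (FF A B (M+1)) + ∑' i : ℕ, (μ.bind P) (GG A B (i+2)) := by
      intro M
      rw [step1 M]
      exact add_le_add le_rfl (ENNReal.sum_le_tsum _)
    have htend : Filter.Tendsto
        (fun M => (μ.bind P) (FF A B (M+1)) + ∑' i : ℕ, (μ.bind P) (GG A B (i+2)))
        Filter.atTop (nhds (0 + ∑' i : ℕ, (μ.bind P) (GG A B (i+2)))) := by
      have h1 := tendsto_atTop_iInf (t_antitone hA hB P hPmeas hPprob hP0 hPstep μ hinv)
      rw [L_zero hA hB hBA P hPmeas hPprob hP0 hPstep μ hinv hrecur hμB] at h1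
      exact h1.add_const _
    rw [zero_add] at htend
    exact ge_of_tendsto htend (Filter.Eventually.of_forall step3)
  · -- tsum ≤ ν
    rw [ENNReal.tsum_eq_iSup_sum]
    refine iSup_le fun s => ?_
    obtain ⟨M, hM⟩ := s.exists_nat_subset_range
    refine le_trans (Finset.sum_le_sum_of_subset hM) ?_
    rw [step1 M]
    exact le_add_self

include hBA in
lemma mu_entr_apply :
    (Measure.map (fun ω => ω 1) ((μ.restrict Aᶜ).bind P)).restrict A B
      = (μ.bind P) (entB A B 1) := by
  have hpre : MeasurableSet ((fun ω : ℕ → X => ω 1) ⁻¹' B) := measurable_pi_apply 1 hB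
  rw [Measure.restrict_apply hB, Set.inter_eq_left.mpr hBA,
    Measure.map_apply (measurable_pi_apply 1) hB,
    Q_restrict_eq P hPmeas hPprob hP0 μ hA.compl hpre]
  congr 1
  ext ω
  simp only [mem_inter_iff, mem_preimage, ev, mem_setOf_eq, mem_compl_iff, entB]
  constructor
  · rintro ⟨h1, h0⟩; exact ⟨h0, h1⟩
  · rintro ⟨h0, h1⟩; exact ⟨h1, h0⟩

include hBA hrecur in
lemma main_case (hμB : μ B ≠ ⊤) :
    (Measure.map (fun ω => ω 1) ((μ.restrict Aᶜ).bind P)).restrict A B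
      = ∫⁻ x, P x (gset A B)
          ∂((Measure.map (fun ω => ω 1) ((μ.restrict Aᶜ).bind P)).restrict A) := by
  rw [RHS_eq hA hB P hPmeas hPprob hP0 μ hPstep,
    RHS_val hA hB hBA P hPmeas hPprob hP0 hPstep μ hinv,
    s_null' hA hB hBA P hPmeas hPprob hP0 μ hPstep hinv hrecur, zero_add,
    mu_entr_apply hA hB hBA P hPmeas hPprob hP0 hPstep μ hinv,
    main_fin hA hB hBA P hPmeas hPprob hP0 hPstep μ hinv hrecur hμB]

end StepF2

end EntrCh


open EntrCh

/-- Let `Y` be a Markov chain on a topological space `X` given by its family `P` of path-space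
laws, recurrent starting under a σ-finite invariant Borel measure `μ`, and let `A` be Borel
with `P_{μ|_{Aᶜ}}(Y₁ ∈ A) > 0`. Then the measure `μ_A^{entr}(B) = ∫_{Aᶜ} P_x(Y₁ ∈ B) μ(dx)`
(for Borel `B ⊆ A`) is invariant for the entrance chain `Y^{→A}`, obtained by sampling `Y`
at the moments it enters `A` from `Aᶜ`. -/
theorem stmt10 {X : Type*} [TopologicalSpace X] [MeasurableSpace X] [BorelSpace X]
    (P : X → Measure (ℕ → X)) (hPmeas : Measurable P)
    (hPprob : ∀ x, IsProbabilityMeasure (P x))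
    (hP0 : ∀ x, (P x).map (fun ω => ω 0) = Measure.dirac x)
    (hPstep : ∀ x, (P x).map (fun ω n => ω (n + 1)) = ((P x).map (fun ω => ω 1)).bind P)
    (μ : Measure X) [SigmaFinite μ]
    (hinv : Measure.map (fun ω => ω 1) (μ.bind P) = μ)
    (hrecur : ∀ B : Set X, MeasurableSet B → 0 < μ B →
      ((μ.restrict B).bind P) {ω | ∀ n, 1 ≤ n → ω n ∉ B} = 0)
    (A : Set X) (hA : MeasurableSet A)
    (μentr : Measure X)
    (hμentr : μentr = (Measure.map (fun ω => ω 1) ((μ.restrict Aᶜ).bind P)).restrict A)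
    (hpos : 0 < μentr A) :
    ∀ B : Set X, MeasurableSet B → B ⊆ A →
      μentr B = ∫⁻ x, (P x) {ω | ω (entrTime A ω) ∈ B} ∂μentr := by
  intro B hB hBA
  subst hμentr
  classical
  set D : ℕ → Set X := disjointed (spanningSets μ) with hD
  have hDmeas : ∀ i, MeasurableSet (D i) :=
    MeasurableSet.disjointed (measurableSet_spanningSets μ)
  have hDdisj : Pairwise (Function.onFun Disjoint D) := disjoint_disjointed _
  have hDunion : (⋃ i, D i) = univ := by
    rw [hD, iUnion_disjointed, iUnion_spanningSets]
  have hBi : ∀ i, MeasurableSet (B ∩ D i) := fun i => hB.inter (hDmeas i)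
  have hBiA : ∀ i, B ∩ D i ⊆ A := fun i => inter_subset_left.trans hBA
  have hBifin : ∀ i, μ (B ∩ D i) ≠ ⊤ := by
    intro i
    refine ne_top_of_le_ne_top (measure_spanningSets_lt_top μ i).ne ?_
    exact measure_mono (inter_subset_right.trans (disjointed_subset _ i))
  have hBeq : B = ⋃ i, B ∩ D i := by
    rw [← inter_iUnion, hDunion, inter_univ]
  have hgdef : {ω : ℕ → X | ω (entrTime A ω) ∈ B} = gset A B := rfl
  have hgdecomp : gset A B = ⋃ i, gset A (B ∩ D i) := by
    ext ω
    simp only [gset, mem_setOf_eq, mem_iUnion, mem_inter_iff]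
    constructor
    · intro h
      have : ω (entrTime A ω) ∈ ⋃ i, D i := by rw [hDunion]; exact mem_univ _
      obtain ⟨i, hi⟩ := mem_iUnion.mp this
      exact ⟨i, h, hi⟩
    · rintro ⟨i, h, _⟩; exact h
  have hgdisj : Pairwise (Function.onFun Disjoint fun i => gset A (B ∩ D i)) := by
    intro i j hij
    refine Set.disjoint_left.mpr fun ω hωi hωj => ?_
    exact Set.disjoint_left.mp (hDdisj hij) hωi.2 hωj.2
  have hLHS : ((Measure.map (fun ω => ω 1) ((μ.restrict Aᶜ).bind P)).restrict A) B
      = ∑' i, ((Measure.map (fun ω => ω 1) ((μ.restrict Aᶜ).bind P)).restrict A) (B ∩ D i) := by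
    conv_lhs => rw [hBeq]
    exact measure_iUnion
      (fun i j hij => (hDdisj hij).mono inter_subset_right inter_subset_right) hBi
  have hptwise : ∀ x, P x (gset A B) = ∑' i, P x (gset A (B ∩ D i)) := by
    intro x
    rw [hgdecomp]
    exact measure_iUnion hgdisj fun i => measurableSet_gset hA (hBi i)
  have hRHS : ∫⁻ x, P x (gset A B)
        ∂((Measure.map (fun ω => ω 1) ((μ.restrict Aᶜ).bind P)).restrict A)
      = ∑' i, ∫⁻ x, P x (gset A (B ∩ D i))
        ∂((Measure.map (fun ω => ω 1) ((μ.restrict Aᶜ).bind P)).restrict A) := by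
    have hmeasi : ∀ i, AEMeasurable (fun x => P x (gset A (B ∩ D i)))
        ((Measure.map (fun ω => ω 1) ((μ.restrict Aᶜ).bind P)).restrict A) := fun i =>
      (((Measure.measurable_coe (measurableSet_gset hA (hBi i))).comp hPmeas)).aemeasurable
    rw [← lintegral_tsum hmeasi]
    exact lintegral_congr fun x => hptwise x
  rw [hgdef, hLHS, hRHS]
  refine tsum_congr fun i => ?_
  exact main_case hA (hBi i) (hBiA i) P hPmeas hPprob hP0 hPstep μ hinv hrecur (hBifin i)
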